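/- (Deterministic core of Theorem 2: the sample modulus of continuity is close to its Riesz-representer counterpart.) In the empirical/population notation, let F be nonempty, convex and centrosymmetric, let γ* ∈ L²(P_Z), and let h assign to each f in the linear span of F a P_Z-integrable function h(·, f): 𝒵 → ℝ, linearly in f, such that γ*·f is P_Z-integrable and the Riesz identity E[h(·, f)] = E[γ*·f] holds for every f in the span of F; define M(f) := E_n[γ*·f − h(·, f)] − E[γ*·f − h(·, f)]. Fix δ > 0 and constants η_Q ∈ (0, 1], η_M > 0, r > 0, and assume every f ∈ F satisfies: (i) if E f² ≥ r² then E_n f² ≥ η_Q·E f²; (ii) if E f² ≥ r² then |M(f)| ≤ η_M·E f²; (iii) if E f² ≤ r² then |M(f)| ≤ η_M·r². Let K := {f ∈ F : E_n f² ≤ δ²/(4n)}, suppose f* ∈ K maximizes f ↦ E_n h(·, f) over K and f̃ ∈ K maximizes f ↦ E_n[γ*·f] over K. Then |2·E_n h(·, f*) − 2·E_n[γ*·f̃]| ≤ 4·max(η_M·δ²/(2·η_Q·n), 2·η_M·r²). -/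

import Mathlib

open MeasureTheory

/-- The empirical mean `E_n u = (1/n)·Σ_{i=1}^n u(z_i)` over fixed design points. -/
noncomputable def empMean {𝒵 : Type*} {n : ℕ} (z : Fin n → 𝒵) (u : 𝒵 → ℝ) : ℝ :=
  (1 / (n : ℝ)) * ∑ i, u (z i)

/-- deterministic core of Theorem 2: the sample modulus of continuity is
close to its Riesz-representer counterpart. If `f*` maximizes `E_n h(·,f)` and `f̃`
maximizes `E_n[γ*·f]` over `K = {f ∈ F : E_n f² ≤ δ²/(4n)}`, then under the regularity
conditions (i)–(iii), `|2·E_n h(·,f*) − 2·E_n[γ*·f̃]| ≤ 4·max(η_M·δ²/(2·η_Q·n), 2·η_M·r²)`. -/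
theorem sample_modulus_close_to_riesz_modulus
    {𝒵 : Type*} [MeasurableSpace 𝒵] (PZ : Measure 𝒵) [IsProbabilityMeasure PZ]
    {n : ℕ} (hn : 0 < n) (z : Fin n → 𝒵)
    (F : Set (𝒵 → ℝ)) (hFne : F.Nonempty) (hFconv : Convex ℝ F)
    (hFsymm : ∀ f ∈ F, (-f) ∈ F) (hFL2 : ∀ f ∈ F, MemLp f 2 PZ)
    (γstar : 𝒵 → ℝ) (hγL2 : MemLp γstar 2 PZ)
    (h : (𝒵 → ℝ) → 𝒵 → ℝ)
    (hlin : ∀ f₁ ∈ Submodule.span ℝ F, ∀ f₂ ∈ Submodule.span ℝ F, ∀ a b : ℝ, ∀ ζ : 𝒵,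
      h (a • f₁ + b • f₂) ζ = a * h f₁ ζ + b * h f₂ ζ)
    (hint : ∀ f ∈ Submodule.span ℝ F,
      Integrable (h f) PZ ∧ Integrable (fun ζ => γstar ζ * f ζ) PZ)
    (hriesz : ∀ f ∈ Submodule.span ℝ F, (∫ ζ, h f ζ ∂PZ) = ∫ ζ, γstar ζ * f ζ ∂PZ)
    (M : (𝒵 → ℝ) → ℝ)
    (hM : ∀ u, M u = empMean z (fun ζ => γstar ζ * u ζ - h u ζ) -
        ∫ ζ, (γstar ζ * u ζ - h u ζ) ∂PZ)
    (δ ηQ ηM r : ℝ)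
    (hδ : 0 < δ) (hηQ0 : 0 < ηQ) (hηQ1 : ηQ ≤ 1) (hηM : 0 < ηM) (hr : 0 < r)
    (hi : ∀ f ∈ F, r ^ 2 ≤ ∫ ζ, f ζ ^ 2 ∂PZ →
      ηQ * ∫ ζ, f ζ ^ 2 ∂PZ ≤ empMean z (fun ζ => f ζ ^ 2))
    (hii : ∀ f ∈ F, r ^ 2 ≤ ∫ ζ, f ζ ^ 2 ∂PZ → |M f| ≤ ηM * ∫ ζ, f ζ ^ 2 ∂PZ)
    (hiii : ∀ f ∈ F, (∫ ζ, f ζ ^ 2 ∂PZ) ≤ r ^ 2 → |M f| ≤ ηM * r ^ 2)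
    (K : Set (𝒵 → ℝ))
    (hK : K = {f ∈ F | empMean z (fun ζ => f ζ ^ 2) ≤ δ ^ 2 / (4 * n)})
    (fstar : 𝒵 → ℝ) (hfstarK : fstar ∈ K)
    (hfstarmax : ∀ f ∈ K, empMean z (h f) ≤ empMean z (h fstar))
    (ftilde : 𝒵 → ℝ) (hftildeK : ftilde ∈ K)
    (hftildemax : ∀ f ∈ K,
      empMean z (fun ζ => γstar ζ * f ζ) ≤ empMean z (fun ζ => γstar ζ * ftilde ζ)) :
    |2 * empMean z (h fstar) - 2 * empMean z (fun ζ => γstar ζ * ftilde ζ)| ≤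
      4 * max (ηM * δ ^ 2 / (2 * ηQ * n)) (2 * ηM * r ^ 2) := by
  set B := max (ηM * δ ^ 2 / (2 * ηQ * n)) (2 * ηM * r ^ 2) with hB
  have hnpos : (0 : ℝ) < n := by exact_mod_cast hn
  have hBpos : 0 < B := lt_of_lt_of_le (by positivity) (le_max_right _ _)
  -- Key: for each f ∈ K, |E_n h f - E_n γ f| ≤ B
  have key : ∀ f ∈ K, |empMean z (h f) - empMean z (fun ζ => γstar ζ * f ζ)| ≤ B := by
    intro f hfK
    rw [hK] at hfK
    obtain ⟨hfF, hfemp⟩ := hfK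
    have hfspan : f ∈ Submodule.span ℝ F := Submodule.subset_span hfF
    obtain ⟨hinth, hintg⟩ := hint f hfspan
    have hMf : M f = empMean z (fun ζ => γstar ζ * f ζ) - empMean z (h f) := by
      rw [hM f, integral_sub hintg hinth, hriesz f hfspan]
      simp only [empMean, Finset.sum_sub_distrib]
      ring
    have habs : |empMean z (h f) - empMean z (fun ζ => γstar ζ * f ζ)| = |M f| := by
      rw [hMf, abs_sub_comm]
    rw [habs]
    by_cases hcase : r ^ 2 ≤ ∫ ζ, f ζ ^ 2 ∂PZ
    · have h1 := hi f hfF hcase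
      have h2 := hii f hfF hcase
      have h3 : ηQ * ∫ ζ, f ζ ^ 2 ∂PZ ≤ δ ^ 2 / (4 * n) := h1.trans hfemp
      have h4 : ηM * ∫ ζ, f ζ ^ 2 ∂PZ ≤ ηM * δ ^ 2 / (2 * ηQ * n) := by
        rw [le_div_iff₀ (by positivity)] at h3 ⊢
        nlinarith [mul_pos hηM hnpos]
      exact h2.trans (h4.trans (le_max_left _ _))
    · push_neg at hcase
      have h2 := hiii f hfF hcase.le
      refine h2.trans (le_trans ?_ (le_max_right _ _))
      nlinarith
  have k1 := key fstar hfstarK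
  have k2 := key ftilde hftildeK
  have m1 := hftildemax fstar hfstarK
  have m2 := hfstarmax ftilde hftildeK
  rw [abs_le] at k1 k2 ⊢
  constructor <;> nlinarith [k1.1, k1.2, k2.1, k2.2, hBpos.le]
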